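/- For every ε > 0 there exists r ∈ ℕ such that for every real α, every r-element sequence (n_j)_{j=1}^r of integers contains indices 1 ≤ j₁ < j₂ < j₃ < j₄ ≤ r with ‖(∂(n_{j₁},n_{j₂},n_{j₃},n_{j₄}))³ α‖ < ε, where ∂(a,b,c,d) = (d−c) − (b−a) and ‖·‖ denotes the distance to the nearest integer. -/

import Mathlib

open Finset

theorem myRamsey (κ : Type) [Fintype κ] [Inhabited κ] (d : ℕ) :
    ∀ m : ℕ, ∃ R : ℕ, ∀ T : Finset ℕ, R ≤ T.card → ∀ C : Finset ℕ → κ,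
      ∃ S, S ⊆ T ∧ S.card = m ∧
        ∀ A, A ⊆ S → ∀ B, B ⊆ S → A.card = d → B.card = d → C A = C B := by
  induction d with
  | zero =>
    intro m
    refine ⟨m, fun T hT C => ?_⟩
    obtain ⟨S, hS, hcard⟩ := exists_subset_card_eq hT
    refine ⟨S, hS, hcard, fun A hA B hB hA0 hB0 => ?_⟩
    rw [card_eq_zero] at hA0 hB0
    subst hA0; subst hB0; rfl
  | succ d IH =>
    intro m
    classical
    choose Rfun hR using IH
    set c := Fintype.card κ with hc
    set L := c * m + d + 1 with hL
    let s : ℕ → ℕ := fun ℓ => Nat.rec 0 (fun _ prev => Rfun prev + 1) ℓ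
    have hs_succ : ∀ ℓ, s (ℓ + 1) = Rfun (s ℓ) + 1 := fun ℓ => rfl
    refine ⟨s L, fun T hT C => ?_⟩
    have chain : ∀ ℓ (U : Finset ℕ), s ℓ ≤ U.card → ∃ t, t ⊆ U ∧ t.card = ℓ ∧
        ∀ x ∈ t, ∀ A, A ⊆ t.filter (x < ·) → ∀ B, B ⊆ t.filter (x < ·) →
          A.card = d → B.card = d → C (insert x A) = C (insert x B) := by
      intro ℓ
      induction ℓ with
      | zero => intro U _; exact ⟨∅, empty_subset _, card_empty, by simp⟩
      | succ ℓ ih =>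
        intro U hU
        rw [hs_succ] at hU
        have hU0 : U.Nonempty := card_pos.mp (by omega)
        set x := U.min' hU0 with hxdef
        have hx : x ∈ U := U.min'_mem hU0
        have hcard : Rfun (s ℓ) ≤ (U.erase x).card := by
          rw [card_erase_of_mem hx]; omega
        obtain ⟨S, hS_sub, hS_card, hS_hom⟩ :=
          hR (s ℓ) (U.erase x) hcard (fun A => C (insert x A))
        obtain ⟨t, ht_sub, ht_card, ht_prop⟩ := ih S (le_of_eq hS_card.symm)
        have hxlt : ∀ y ∈ S, x < y := by
          intro y hy
          have h1 : y ∈ U := mem_of_mem_erase (hS_sub hy)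
          have h2 : y ≠ x := ne_of_mem_erase (hS_sub hy)
          exact lt_of_le_of_ne (U.min'_le y h1) (Ne.symm h2)
        have hxt : x ∉ t := fun hxt => lt_irrefl x (hxlt x (ht_sub hxt))
        refine ⟨insert x t, ?_, ?_, ?_⟩
        · intro z hz
          rcases mem_insert.mp hz with rfl | hz
          · exact hx
          · exact mem_of_mem_erase (hS_sub (ht_sub hz))
        · rw [card_insert_of_notMem hxt, ht_card]
        · intro y hy A hA B hB hAd hBd
          rcases mem_insert.mp hy with rfl | hy
          · have hfil : (insert x t).filter (x < ·) ⊆ S := by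
              intro z hz
              rw [mem_filter] at hz
              rcases mem_insert.mp hz.1 with rfl | hz1
              · exact absurd hz.2 (lt_irrefl _)
              · exact ht_sub hz1
            exact hS_hom A (hA.trans hfil) B (hB.trans hfil) hAd hBd
          · have hxy : x < y := hxlt y (ht_sub hy)
            have hfil : (insert x t).filter (y < ·) = t.filter (y < ·) := by
              ext z
              simp only [mem_filter, mem_insert]
              constructor
              · rintro ⟨rfl | hz, h2⟩
                · exact absurd (hxy.trans h2) (lt_irrefl _)
                · exact ⟨hz, h2⟩
              · rintro ⟨hz, h2⟩; exact ⟨Or.inr hz, h2⟩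
            rw [hfil] at hA hB
            exact ht_prop y hy A hA B hB hAd hBd
    obtain ⟨t, ht_sub, ht_card, ht⟩ := chain L T hT
    have hmono : ∀ x ∈ t, ∀ y ∈ t, x < y →
        (t.filter (y < ·)).card < (t.filter (x < ·)).card := by
      intro x hx y hy h
      have hylt : y ∈ t.filter (x < ·) := mem_filter.mpr ⟨hy, h⟩
      have hsub : t.filter (y < ·) ⊆ (t.filter (x < ·)).erase y := by
        intro z hz
        rw [mem_filter] at hz
        rw [mem_erase, mem_filter]
        exact ⟨ne_of_gt hz.2, hz.1, h.trans hz.2⟩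
      have h1 := card_le_card hsub
      rw [card_erase_of_mem hylt] at h1
      have h2 : 0 < (t.filter (x < ·)).card := card_pos.mpr ⟨y, hylt⟩
      omega
    set Bad := t.filter (fun z => ¬ d ≤ (t.filter (z < ·)).card) with hBadDef
    have hBadcard : Bad.card ≤ d := by
      have hmapsb : ∀ z ∈ Bad, (t.filter (z < ·)).card ∈ Finset.range d := by
        intro z hz
        rw [mem_range]
        have := (mem_filter.mp hz).2
        omega
      have hinj : Set.InjOn (fun z => (t.filter (z < ·)).card) ↑Bad := by
        intro a ha b hb hab
        rw [mem_coe, hBadDef, mem_filter] at ha hb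
        by_contra hne
        rcases lt_or_gt_of_ne hne with h | h
        · have := hmono a ha.1 b hb.1 h; simp only at hab; omega
        · have := hmono b hb.1 a ha.1 h; simp only at hab; omega
      have := card_le_card_of_injOn _ hmapsb hinj
      simpa using this
    set Good := t.filter (fun z => d ≤ (t.filter (z < ·)).card) with hGoodDef
    have hGoodcard : c * m + 1 ≤ Good.card := by
      have hsplit := card_filter_add_card_filter_not
        (s := t) (p := fun z => d ≤ (t.filter (z < ·)).card)
      rw [← hGoodDef, ← hBadDef] at hsplit
      omega
    have hAx : ∀ x, d ≤ (t.filter (x < ·)).card →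
        ∃ A, A ⊆ t.filter (x < ·) ∧ A.card = d := fun x hx => exists_subset_card_eq hx
    let Afun : ℕ → Finset ℕ := fun x =>
      if h : d ≤ (t.filter (x < ·)).card then (hAx x h).choose else ∅
    have hAfun : ∀ x, d ≤ (t.filter (x < ·)).card →
        Afun x ⊆ t.filter (x < ·) ∧ (Afun x).card = d := by
      intro x h
      simp only [Afun, dif_pos h]
      exact (hAx x h).choose_spec
    let g : ℕ → κ := fun x => C (insert x (Afun x))
    have hmaps : ∀ x ∈ Good, g x ∈ (univ : Finset κ) := fun x _ => mem_univ _
    have hcard2 : (univ : Finset κ).card * m ≤ Good.card := by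
      rw [card_univ, ← hc]; omega
    obtain ⟨κ₀, _, hfiber⟩ :=
      exists_le_card_fiber_of_mul_le_card_of_maps_to hmaps univ_nonempty hcard2
    obtain ⟨S, hS_sub, hS_card⟩ := exists_subset_card_eq hfiber
    have hS_T : S ⊆ T := by
      intro z hz
      exact ht_sub ((filter_subset _ _) ((filter_subset _ _) (hS_sub hz)))
    have key : ∀ A, A ⊆ S → A.card = d + 1 → C A = κ₀ := by
      intro A hA hAd
      have hA0 : A.Nonempty := card_pos.mp (by omega)
      set x := A.min' hA0 with hxdef
      have hxA : x ∈ A := A.min'_mem hA0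
      have hxS := hS_sub (hA hxA)
      rw [mem_filter] at hxS
      have hxGood := hxS.1
      have hgx : g x = κ₀ := hxS.2
      rw [hGoodDef, mem_filter] at hxGood
      have hxt : x ∈ t := hxGood.1
      have hxd : d ≤ (t.filter (x < ·)).card := hxGood.2
      have herase_sub : A.erase x ⊆ t.filter (x < ·) := by
        intro z hz
        rw [mem_erase] at hz
        have hzt : z ∈ t := (filter_subset _ _) ((filter_subset _ _) (hS_sub (hA hz.2)))
        rw [mem_filter]
        exact ⟨hzt, lt_of_le_of_ne (A.min'_le z hz.2) (Ne.symm hz.1)⟩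
      have herase_card : (A.erase x).card = d := by
        rw [card_erase_of_mem hxA, hAd]; omega
      have hres := ht x hxt (A.erase x) herase_sub (Afun x) (hAfun x hxd).1
        herase_card (hAfun x hxd).2
      rw [insert_erase hxA] at hres
      rw [hres]
      exact hgx
    refine ⟨S, hS_T, hS_card, fun A hA B hB hAd hBd => ?_⟩
    rw [key A hA hAd, key B hB hBd]

open Finset

noncomputable def cellInt (N : ℕ) (x : ℝ) : ℤ := ⌊(N : ℝ) * Int.fract x⌋

lemma cellInt_nonneg (N : ℕ) (x : ℝ) : 0 ≤ cellInt N x :=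
  Int.floor_nonneg.mpr (mul_nonneg (Nat.cast_nonneg N) (Int.fract_nonneg x))

lemma cellInt_lt {N : ℕ} (hN : 0 < N) (x : ℝ) : cellInt N x < N := by
  have hN' : (0:ℝ) < N := by exact_mod_cast hN
  have h : (N:ℝ) * Int.fract x < ((N:ℤ):ℝ) := by
    have := Int.fract_lt_one x
    push_cast
    nlinarith
  exact Int.floor_lt.mpr h

lemma fract_close {N : ℕ} (hN : 0 < N) {x y : ℝ} (h : cellInt N x = cellInt N y) :
    |Int.fract x - Int.fract y| < 1 / N := by
  have hN' : (0:ℝ) < N := by exact_mod_cast hN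
  have h1 : ((cellInt N x : ℤ):ℝ) ≤ (N:ℝ) * Int.fract x := Int.floor_le _
  have h2 : (N:ℝ) * Int.fract x < (cellInt N x : ℝ) + 1 := Int.lt_floor_add_one _
  have h3 : ((cellInt N y : ℤ):ℝ) ≤ (N:ℝ) * Int.fract y := Int.floor_le _
  have h4 : (N:ℝ) * Int.fract y < (cellInt N y : ℝ) + 1 := Int.lt_floor_add_one _
  rw [h] at h1 h2
  rw [lt_div_iff₀ hN']
  have habs : |Int.fract x - Int.fract y| * N = |Int.fract x * N - Int.fract y * N| := by
    rw [← sub_mul, abs_mul, abs_of_pos hN']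
  rw [habs, abs_sub_lt_iff]
  constructor <;> nlinarith

lemma near_int_of_split {N : ℕ} (hN : 0 < N) {x₁ x₂ x₃ : ℝ}
    (hsum : x₁ = x₂ + x₃)
    (h3 : cellInt N x₃ = cellInt N x₁) :
    ∃ m : ℤ, |x₂ - (m:ℝ)| < 1 / N := by
  refine ⟨⌊x₁⌋ - ⌊x₃⌋, ?_⟩
  have key : x₂ - ((⌊x₁⌋ - ⌊x₃⌋ : ℤ) : ℝ) = Int.fract x₁ - Int.fract x₃ := by
    simp only [Int.fract]
    push_cast
    linarith
  rw [key, abs_sub_comm]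
  exact fract_close hN h3

lemma sort_four {a b c d : ℕ} (h1 : a < b) (h2 : b < c) (h3 : c < d) :
    ({a, b, c, d} : Finset ℕ).sort (· ≤ ·) = [a, b, c, d] := by
  have hnd : ([a,b,c,d] : List ℕ).Nodup := by
    simp only [List.nodup_cons, List.mem_cons, List.not_mem_nil, List.nodup_nil,
      not_or, List.mem_singleton, List.nodup_singleton, and_true, not_false_eq_true]
    omega
  have hsorted : ([a,b,c,d] : List ℕ).Pairwise (· ≤ ·) := by
    simp only [List.pairwise_cons, List.mem_cons, List.not_mem_nil, List.Pairwise.nil,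
      List.mem_singleton, and_true, List.forall_mem_cons, List.forall_mem_singleton,
      List.forall_mem_nil]
    refine ⟨fun z hz => ?_, fun z hz => ?_, fun z hz => ?_, fun z hz => hz.elim⟩ <;>
      (rcases hz with rfl | rfl | rfl | h <;> first | omega | exact h.elim)
  refine List.Perm.eq_of_pairwise' (Finset.pairwise_sort _ _) hsorted ?_
  rw [List.perm_ext_iff_of_nodup (Finset.sort_nodup _ _) hnd]
  intro x
  rw [Finset.mem_sort]
  simp only [Finset.mem_insert, Finset.mem_singleton, List.mem_cons, List.mem_singleton,
    List.not_mem_nil, or_false]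

lemma card_four {a b c d : ℕ} (h1 : a < b) (h2 : b < c) (h3 : c < d) :
    ({a, b, c, d} : Finset ℕ).card = 4 := by
  rw [card_insert_of_notMem (by simp; omega), card_insert_of_notMem (by simp; omega),
    card_insert_of_notMem (by simp; omega), card_singleton]

open Finset

lemma near_int_transfer {N : ℕ} (hN : 0 < N) {z w : ℝ} (hc : cellInt N z = cellInt N w)
    {m : ℤ} (hw : |w - (m:ℝ)| < 1 / N) : ∃ m' : ℤ, |z - (m':ℝ)| < 2 / N := by
  refine ⟨⌊z⌋ - ⌊w⌋ + m, ?_⟩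
  have key : z - ((⌊z⌋ - ⌊w⌋ + m : ℤ):ℝ) = (Int.fract z - Int.fract w) + (w - m) := by
    simp only [Int.fract]; push_cast; ring
  rw [key]
  have h1 := fract_close hN hc
  calc |(Int.fract z - Int.fract w) + (w - (m:ℝ))|
      ≤ |Int.fract z - Int.fract w| + |w - (m:ℝ)| := abs_add_le _ _
    _ < 1/N + 1/N := add_lt_add h1 hw
    _ = 2/N := by ring

/-- Finitary version: for every `ε > 0` there is `r` (independent of `α`) such that any
`r` integers contain `j₁ < j₂ < j₃ < j₄` with
`‖((n j₄ - n j₃) - (n j₂ - n j₁))³ α‖ < ε`. -/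
theorem cubic_finitary_Delta_two_star :
    ∀ ε : ℝ, 0 < ε → ∃ r : ℕ, ∀ α : ℝ, ∀ n : Fin r → ℤ,
      ∃ j₁ j₂ j₃ j₄ : Fin r, j₁ < j₂ ∧ j₂ < j₃ ∧ j₃ < j₄ ∧
        ∃ m : ℤ, |((((n j₄ - n j₃) - (n j₂ - n j₁)) ^ 3 : ℤ) : ℝ) * α - (m : ℝ)| < ε := by
  intro ε hε
  classical
  obtain ⟨N, hNgt⟩ := exists_nat_gt (4 / ε)
  have hN : 0 < N := by
    have h4 : (0:ℝ) < 4 / ε := by positivity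
    have : (0:ℝ) < (N:ℝ) := lt_trans h4 hNgt
    exact_mod_cast this
  have hN' : (0:ℝ) < N := by exact_mod_cast hN
  have hNe : 4 / (N:ℝ) < ε := by
    rw [div_lt_iff₀ hN']
    have : (4:ℝ) = ε * (4/ε) := by field_simp
    rw [this]
    exact mul_lt_mul_of_pos_left hNgt hε
  set κ := (Fin N × Fin N × Fin N × Fin N) with hκ
  haveI : Inhabited κ := ⟨(⟨0,hN⟩,⟨0,hN⟩,⟨0,hN⟩,⟨0,hN⟩)⟩
  obtain ⟨R, hRam⟩ := myRamsey κ 4 6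
  refine ⟨R, fun α n => ?_⟩
  set n' : ℕ → ℤ := fun i => if h : i < R then n ⟨i, h⟩ else 0 with hn'
  set P1 : ℕ → ℕ → ℝ := fun a b => (((n' b - n' a) ^ 3 : ℤ) : ℝ) * α with hP1
  set P3 : ℕ → ℕ → ℕ → ℕ → ℝ :=
    fun a b c d => ((3 * (n' b - n' a) ^ 2 * (n' d - n' c) : ℤ) : ℝ) * α with hP3
  set P4 : ℕ → ℕ → ℕ → ℕ → ℝ :=
    fun a b c d => ((3 * (n' b - n' a) * (n' d - n' c) ^ 2 : ℤ) : ℝ) * α with hP4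
  set cl : ℝ → Fin N := fun x => ⟨(cellInt N x).toNat, by
    have h1 := cellInt_nonneg N x
    have h2 := cellInt_lt hN x
    omega⟩ with hcl
  have cl_inj : ∀ x y : ℝ, cl x = cl y → cellInt N x = cellInt N y := by
    intro x y h
    have h' := congrArg Fin.val h
    simp only [hcl] at h'
    have h1 := cellInt_nonneg N x
    have h2 := cellInt_nonneg N y
    omega
  set F : List ℕ → κ := fun l => match l with
    | [a, b, c, d] => (cl (P1 a b), cl (P1 c d), cl (P3 a b c d), cl (P4 a b c d))
    | _ => default
    with hF
  set C : Finset ℕ → κ := fun A => F (A.sort (· ≤ ·)) with hC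
  have evalC : ∀ a b c d : ℕ, a < b → b < c → c < d →
      C {a,b,c,d} = (cl (P1 a b), cl (P1 c d), cl (P3 a b c d), cl (P4 a b c d)) := by
    intro a b c d h1 h2 h3
    rw [hC]
    simp only
    rw [sort_four h1 h2 h3]
  obtain ⟨S, hS_sub, hS_card, hhom⟩ := hRam (Finset.range R) (by rw [card_range]) C
  have hlen : (S.sort (· ≤ ·)).length = 6 := by rw [Finset.length_sort, hS_card]
  have hsorted : (S.sort (· ≤ ·)).Pairwise (· < ·) := S.sortedLT_sort.pairwise
  have hmem : ∀ x ∈ (S.sort (· ≤ ·)), x ∈ S := fun x hx => (Finset.mem_sort _).mp hx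
  generalize hl : (S.sort (· ≤ ·)) = l at hlen hsorted hmem
  rcases l with _ | ⟨q₁, _ | ⟨q₂, _ | ⟨q₃, _ | ⟨q₄, _ | ⟨q₅, _ | ⟨q₆, rest⟩⟩⟩⟩⟩⟩ <;>
    simp only [List.length_cons, List.length_nil] at hlen
  · omega
  · omega
  · omega
  · omega
  · omega
  · omega
  have hrest : rest = [] := by
    cases rest with
    | nil => rfl
    | cons a t => simp at hlen
  subst hrest
  simp only [List.pairwise_cons, List.mem_cons, List.not_mem_nil, List.Pairwise.nil,
    List.mem_singleton, and_true, List.forall_mem_cons, List.forall_mem_singleton,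
    List.forall_mem_nil, or_false] at hsorted
  obtain ⟨H1, H2, H3, H4, H5⟩ := hsorted
  have h56 : q₅ < q₆ := H5.1 q₆ rfl
  have h12 : q₁ < q₂ := H1 q₂ (by tauto)
  have h13 : q₁ < q₃ := H1 q₃ (by tauto)
  have h14 : q₁ < q₄ := H1 q₄ (by tauto)
  have h15 : q₁ < q₅ := H1 q₅ (by tauto)
  have h16 : q₁ < q₆ := H1 q₆ (by tauto)
  have h23 : q₂ < q₃ := H2 q₃ (by tauto)
  have h24 : q₂ < q₄ := H2 q₄ (by tauto)
  have h25 : q₂ < q₅ := H2 q₅ (by tauto)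
  have h26 : q₂ < q₆ := H2 q₆ (by tauto)
  have h34 : q₃ < q₄ := H3 q₄ (by tauto)
  have h35 : q₃ < q₅ := H3 q₅ (by tauto)
  have h36 : q₃ < q₆ := H3 q₆ (by tauto)
  have h45 : q₄ < q₅ := H4 q₅ (by tauto)
  have h46 : q₄ < q₆ := H4 q₆ (by tauto)
  have hq₁ : q₁ ∈ S := hmem q₁ (by simp)
  have hq₂ : q₂ ∈ S := hmem q₂ (by simp)
  have hq₃ : q₃ ∈ S := hmem q₃ (by simp)
  have hq₄ : q₄ ∈ S := hmem q₄ (by simp)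
  have hq₅ : q₅ ∈ S := hmem q₅ (by simp)
  have hq₆ : q₆ ∈ S := hmem q₆ (by simp)
  have subsetS : ∀ a b c d : ℕ, a ∈ S → b ∈ S → c ∈ S → d ∈ S →
      ({a,b,c,d} : Finset ℕ) ⊆ S := by
    intro a b c d ha hb hc hd z hz
    simp only [Finset.mem_insert, Finset.mem_singleton] at hz
    rcases hz with rfl | rfl | rfl | rfl
    exacts [ha, hb, hc, hd]
  -- homogeneity instances
  have hEqD : C {q₃,q₄,q₅,q₆} = C {q₁,q₂,q₃,q₄} :=
    hhom _ (subsetS _ _ _ _ hq₃ hq₄ hq₅ hq₆) _ (subsetS _ _ _ _ hq₁ hq₂ hq₃ hq₄)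
      (card_four h34 h45 h56) (card_four h12 h23 h34)
  have hEqA1 : C {q₁,q₂,q₃,q₅} = C {q₁,q₂,q₃,q₄} :=
    hhom _ (subsetS _ _ _ _ hq₁ hq₂ hq₃ hq₅) _ (subsetS _ _ _ _ hq₁ hq₂ hq₃ hq₄)
      (card_four h12 h23 h35) (card_four h12 h23 h34)
  have hEqA3 : C {q₁,q₂,q₄,q₅} = C {q₁,q₂,q₃,q₄} :=
    hhom _ (subsetS _ _ _ _ hq₁ hq₂ hq₄ hq₅) _ (subsetS _ _ _ _ hq₁ hq₂ hq₃ hq₄)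
      (card_four h12 h24 h45) (card_four h12 h23 h34)
  have hEqB1 : C {q₁,q₃,q₄,q₅} = C {q₁,q₂,q₃,q₄} :=
    hhom _ (subsetS _ _ _ _ hq₁ hq₃ hq₄ hq₅) _ (subsetS _ _ _ _ hq₁ hq₂ hq₃ hq₄)
      (card_four h13 h34 h45) (card_four h12 h23 h34)
  have hEqB3 : C {q₂,q₃,q₄,q₅} = C {q₁,q₂,q₃,q₄} :=
    hhom _ (subsetS _ _ _ _ hq₂ hq₃ hq₄ hq₅) _ (subsetS _ _ _ _ hq₁ hq₂ hq₃ hq₄)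
      (card_four h23 h34 h45) (card_four h12 h23 h34)
  rw [evalC _ _ _ _ h34 h45 h56, evalC _ _ _ _ h12 h23 h34] at hEqD
  rw [evalC _ _ _ _ h12 h23 h35, evalC _ _ _ _ h12 h23 h34] at hEqA1
  rw [evalC _ _ _ _ h12 h24 h45, evalC _ _ _ _ h12 h23 h34] at hEqA3
  rw [evalC _ _ _ _ h13 h34 h45, evalC _ _ _ _ h12 h23 h34] at hEqB1
  rw [evalC _ _ _ _ h23 h34 h45, evalC _ _ _ _ h12 h23 h34] at hEqB3
  have cD1 : cl (P1 q₃ q₄) = cl (P1 q₁ q₂) := congrArg (fun p => p.1) hEqD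
  have cA1 : cl (P3 q₁ q₂ q₃ q₅) = cl (P3 q₁ q₂ q₃ q₄) := congrArg (fun p => p.2.2.1) hEqA1
  have cA3 : cl (P3 q₁ q₂ q₄ q₅) = cl (P3 q₁ q₂ q₃ q₄) := congrArg (fun p => p.2.2.1) hEqA3
  have cA3' : cl (P4 q₁ q₂ q₄ q₅) = cl (P4 q₁ q₂ q₃ q₄) := congrArg (fun p => p.2.2.2) hEqA3
  have cB1 : cl (P4 q₁ q₃ q₄ q₅) = cl (P4 q₁ q₂ q₃ q₄) := congrArg (fun p => p.2.2.2) hEqB1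
  have cB3 : cl (P4 q₂ q₃ q₄ q₅) = cl (P4 q₁ q₂ q₃ q₄) := congrArg (fun p => p.2.2.2) hEqB3
  -- t₁ vs t₂ cells
  have hcell12 : cellInt N (P1 q₃ q₄) = cellInt N (P1 q₁ q₂) :=
    cl_inj _ _ cD1
  -- split for P3
  have hsum3 : P3 q₁ q₂ q₃ q₅ = P3 q₁ q₂ q₃ q₄ + P3 q₁ q₂ q₄ q₅ := by
    simp only [hP3]
    push_cast
    ring
  have hcell3 : cellInt N (P3 q₁ q₂ q₄ q₅) = cellInt N (P3 q₁ q₂ q₃ q₅) :=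
    cl_inj _ _ (cA3.trans cA1.symm)
  obtain ⟨m₃, hm₃⟩ := near_int_of_split hN hsum3 hcell3
  -- split for P4
  have hsum4 : P4 q₁ q₃ q₄ q₅ = P4 q₁ q₂ q₄ q₅ + P4 q₂ q₃ q₄ q₅ := by
    simp only [hP4]
    push_cast
    ring
  have hcell4 : cellInt N (P4 q₂ q₃ q₄ q₅) = cellInt N (P4 q₁ q₃ q₄ q₅) :=
    cl_inj _ _ (cB3.trans cB1.symm)
  obtain ⟨m₄', hm₄'⟩ := near_int_of_split hN hsum4 hcell4
  have hcell4' : cellInt N (P4 q₁ q₂ q₃ q₄) = cellInt N (P4 q₁ q₂ q₄ q₅) :=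
    cl_inj _ _ cA3'.symm
  obtain ⟨m₄, hm₄⟩ := near_int_transfer hN hcell4' hm₄'
  -- final
  have hq₁R : q₁ < R := mem_range.mp (hS_sub hq₁)
  have hq₂R : q₂ < R := mem_range.mp (hS_sub hq₂)
  have hq₃R : q₃ < R := mem_range.mp (hS_sub hq₃)
  have hq₄R : q₄ < R := mem_range.mp (hS_sub hq₄)
  refine ⟨⟨q₁, hq₁R⟩, ⟨q₂, hq₂R⟩, ⟨q₃, hq₃R⟩, ⟨q₄, hq₄R⟩,
    Fin.mk_lt_mk.mpr h12, Fin.mk_lt_mk.mpr h23, Fin.mk_lt_mk.mpr h34, ?_⟩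
  have hval : ∀ (i : ℕ) (h : i < R), n ⟨i, h⟩ = n' i := by
    intro i h
    rw [hn']
    simp only
    rw [dif_pos h]
  rw [hval q₁ hq₁R, hval q₂ hq₂R, hval q₃ hq₃R, hval q₄ hq₄R]
  refine ⟨(⌊P1 q₃ q₄⌋ - ⌊P1 q₁ q₂⌋) + m₃ - m₄, ?_⟩
  have hident : (((n' q₄ - n' q₃ - (n' q₂ - n' q₁)) ^ 3 : ℤ) : ℝ) * α
      = P1 q₃ q₄ - P1 q₁ q₂ + P3 q₁ q₂ q₃ q₄ - P4 q₁ q₂ q₃ q₄ := by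
    simp only [hP1, hP3, hP4]
    push_cast
    ring
  rw [hident]
  have hsplitX : P1 q₃ q₄ - P1 q₁ q₂ + P3 q₁ q₂ q₃ q₄ - P4 q₁ q₂ q₃ q₄
      - (((⌊P1 q₃ q₄⌋ - ⌊P1 q₁ q₂⌋) + m₃ - m₄ : ℤ) : ℝ)
      = (Int.fract (P1 q₃ q₄) - Int.fract (P1 q₁ q₂)) + (P3 q₁ q₂ q₃ q₄ - m₃)
        + ((m₄ : ℝ) - P4 q₁ q₂ q₃ q₄) := by
    simp only [Int.fract]
    push_cast
    ring
  rw [hsplitX]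
  have b1 : |Int.fract (P1 q₃ q₄) - Int.fract (P1 q₁ q₂)| < 1 / N := fract_close hN hcell12
  have b2 : |P3 q₁ q₂ q₃ q₄ - (m₃:ℝ)| < 1 / N := hm₃
  have b3 : |(m₄:ℝ) - P4 q₁ q₂ q₃ q₄| < 2 / N := by
    rw [abs_sub_comm]; exact hm₄
  calc |Int.fract (P1 q₃ q₄) - Int.fract (P1 q₁ q₂) + (P3 q₁ q₂ q₃ q₄ - (m₃:ℝ))
        + ((m₄:ℝ) - P4 q₁ q₂ q₃ q₄)|
      ≤ |Int.fract (P1 q₃ q₄) - Int.fract (P1 q₁ q₂)| + |P3 q₁ q₂ q₃ q₄ - (m₃:ℝ)|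
        + |(m₄:ℝ) - P4 q₁ q₂ q₃ q₄| := abs_add_three _ _ _
    _ < 1/N + 1/N + 2/N := by
        apply add_lt_add (add_lt_add b1 b2) b3
    _ = 4/N := by ring
    _ < ε := hNe
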